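/- The minimum size of a set X ⊆ E with Σᵢ min(|Eᵢ ∖ X|, dᵢ) ≤ Σᵢ dᵢ - k equals the minimum over all J ⊆ {1,…,p} with Σ_{i∈J} dᵢ ≥ k of k + Σ_{i∈J} cᵢ, where cᵢ = |Eᵢ| - dᵢ. -/

import Mathlib

/-- Sum of cardinalities of intersections with disjoint sets is at most the card. -/
lemma aux_sum_inter_le {α : Type*} [DecidableEq α] {p : ℕ} (E : Fin p → Finset α)
    (hdisj : ∀ i j, i ≠ j → Disjoint (E i) (E j)) (J : Finset (Fin p)) (X : Finset α) :
    ∑ i ∈ J, (E i ∩ X).card ≤ X.card := by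
  rw [← Finset.card_biUnion (fun i _ j _ hij =>
    (hdisj i j hij).mono Finset.inter_subset_left Finset.inter_subset_left)]
  exact Finset.card_le_card (Finset.biUnion_subset.2 fun i _ => Finset.inter_subset_right)

lemma aux_sum_inter_eq {α : Type*} [DecidableEq α] {p : ℕ} (E : Fin p → Finset α)
    (hdisj : ∀ i j, i ≠ j → Disjoint (E i) (E j)) (J : Finset (Fin p)) (X : Finset α)
    (hX : X ⊆ J.biUnion E) :
    ∑ i ∈ J, (E i ∩ X).card = X.card := by
  refine le_antisymm (aux_sum_inter_le E hdisj J X) ?_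
  rw [← Finset.card_biUnion (fun i _ j _ hij =>
    (hdisj i j hij).mono Finset.inter_subset_left Finset.inter_subset_left)]
  refine Finset.card_le_card fun a ha => ?_
  obtain ⟨i, hi, hai⟩ := Finset.mem_biUnion.1 (hX ha)
  exact Finset.mem_biUnion.2 ⟨i, hi, Finset.mem_inter.2 ⟨hai, ha⟩⟩

/-- The rank reduction problem on a partition matroid equals a knapsack-type
minimization. -/
theorem stmt_11 {α : Type*} [DecidableEq α] (p : ℕ) (E : Fin p → Finset α)
    (d : Fin p → ℕ) (hdisj : ∀ i j, i ≠ j → Disjoint (E i) (E j))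
    (hd : ∀ i, d i ≤ (E i).card) (k : ℕ) (hk1 : 1 ≤ k) (hk2 : k ≤ ∑ i, d i) :
    sInf {n : ℕ | ∃ X ⊆ Finset.univ.biUnion E, X.card = n ∧
        ∑ i, min ((E i \ X).card) (d i) + k ≤ ∑ i, d i} =
    sInf {n : ℕ | ∃ J : Finset (Fin p), k ≤ ∑ i ∈ J, d i ∧
        n = k + ∑ i ∈ J, ((E i).card - d i)} := by
  have hcardsd : ∀ (X : Finset α) (i : Fin p),
      (E i ∩ X).card + (E i \ X).card = (E i).card := fun X i =>
    Finset.card_inter_add_card_sdiff (E i) X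
  refine le_antisymm ?_ ?_
  · -- LHS ≤ RHS : from J construct X
    refine le_csInf ⟨k + ∑ i, ((E i).card - d i), Finset.univ, hk2, rfl⟩ ?_
    rintro n ⟨J, hJ, rfl⟩
    -- sum of cards over J
    have hsumE : ∑ i ∈ J, ((E i).card - d i) + ∑ i ∈ J, d i = ∑ i ∈ J, (E i).card := by
      rw [← Finset.sum_add_distrib]
      exact Finset.sum_congr rfl fun i _ => Nat.sub_add_cancel (hd i)
    have hU : (J.biUnion E).card = ∑ i ∈ J, (E i).card :=
      Finset.card_biUnion fun i _ j _ hij => hdisj i j hij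
    have hle : k + ∑ i ∈ J, ((E i).card - d i) ≤ (J.biUnion E).card := by omega
    obtain ⟨X, hXU, hXcard⟩ := Finset.exists_subset_card_eq hle
    refine Nat.sInf_le ⟨X, hXU.trans (Finset.biUnion_subset_biUnion_of_subset_left E
      (Finset.subset_univ J)), hXcard, ?_⟩
    -- for i ∉ J, E i ∩ X = ∅, so E i \ X = E i
    have houtside : ∀ i ∉ J, E i \ X = E i := by
      intro i hi
      refine Finset.sdiff_eq_self_of_disjoint ?_
      refine Finset.disjoint_left.2 fun a hai haX => ?_
      obtain ⟨j, hj, haj⟩ := Finset.mem_biUnion.1 (hXU haX)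
      exact Finset.disjoint_left.1 (hdisj i j (fun h => hi (h ▸ hj))) hai haj
    have hsplit : ∀ f : Fin p → ℕ, ∑ i, f i =
        ∑ i ∈ J, f i + ∑ i ∈ Finset.univ \ J, f i := by
      intro f
      rw [← Finset.sum_sdiff (Finset.subset_univ J)]
      omega
    rw [hsplit (fun i => min ((E i \ X).card) (d i)), hsplit d]
    have heq2 : ∑ i ∈ Finset.univ \ J, min ((E i \ X).card) (d i) =
        ∑ i ∈ Finset.univ \ J, d i := by
      refine Finset.sum_congr rfl fun i hi => ?_
      rw [houtside i (Finset.mem_sdiff.1 hi).2, min_eq_right (hd i)]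
    rw [heq2]
    -- now need: ∑_{i∈J} min + k ≤ ∑_{i∈J} d
    have hXin : ∑ i ∈ J, (E i ∩ X).card = X.card := aux_sum_inter_eq E hdisj J X hXU
    have hminle : ∑ i ∈ J, min ((E i \ X).card) (d i) ≤ ∑ i ∈ J, (E i \ X).card :=
      Finset.sum_le_sum fun i _ => min_le_left _ _
    have hsdiffsum : ∑ i ∈ J, (E i ∩ X).card + ∑ i ∈ J, (E i \ X).card
        = ∑ i ∈ J, (E i).card := by
      rw [← Finset.sum_add_distrib]
      exact Finset.sum_congr rfl fun i _ => hcardsd X i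
    omega
  · -- RHS ≤ LHS : from X construct J
    refine le_csInf ⟨(Finset.univ.biUnion E).card, Finset.univ.biUnion E,
      Finset.Subset.refl _, rfl, ?_⟩ ?_
    · have : ∀ i : Fin p, min ((E i \ Finset.univ.biUnion E).card) (d i) = 0 := by
        intro i
        have : E i \ Finset.univ.biUnion E = ∅ := by
          rw [Finset.sdiff_eq_empty_iff_subset]
          exact Finset.subset_biUnion_of_mem E (Finset.mem_univ i)
        simp [this]
      simp only [this, Finset.sum_const_zero, zero_add]
      exact hk2
    rintro n ⟨X, hX, rfl, hsum⟩
    set J := Finset.univ.filter (fun i => (E i).card - d i < (E i ∩ X).card) with hJdef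
    -- termwise: d i ≤ min + (x i - c i)
    have hterm : ∀ i : Fin p, d i ≤ min ((E i \ X).card) (d i)
        + ((E i ∩ X).card - ((E i).card - d i)) := by
      intro i
      have h1 := hcardsd X i
      have h2 := hd i
      omega
    have hsum2 : ∑ i, d i ≤ ∑ i, min ((E i \ X).card) (d i)
        + ∑ i, ((E i ∩ X).card - ((E i).card - d i)) := by
      rw [← Finset.sum_add_distrib]
      exact Finset.sum_le_sum fun i _ => hterm i
    have hk3 : k ≤ ∑ i, ((E i ∩ X).card - ((E i).card - d i)) := by omega
    have hJsum : ∑ i ∈ J, ((E i ∩ X).card - ((E i).card - d i)) =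
        ∑ i, ((E i ∩ X).card - ((E i).card - d i)) := by
      refine Finset.sum_subset (Finset.subset_univ J) fun i _ hi => ?_
      have : ¬ ((E i).card - d i < (E i ∩ X).card) := by
        simpa [hJdef] using hi
      omega
    have hJd : k ≤ ∑ i ∈ J, d i := by
      refine le_trans (by omega) (le_trans (le_of_eq hJsum.symm) ?_)
      refine Finset.sum_le_sum fun i _ => ?_
      have h1 := hcardsd X i
      have h2 := hd i
      omega
    have hJx : ∑ i ∈ J, ((E i).card - d i) + ∑ i ∈ J, ((E i ∩ X).card - ((E i).card - d i))
        ≤ ∑ i ∈ J, (E i ∩ X).card := by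
      rw [← Finset.sum_add_distrib]
      refine Finset.sum_le_sum fun i hi => ?_
      have : (E i).card - d i < (E i ∩ X).card := by
        simpa [hJdef] using (Finset.mem_filter.1 hi).2
      omega
    have hXle : ∑ i ∈ J, (E i ∩ X).card ≤ X.card := aux_sum_inter_le E hdisj J X
    refine le_trans (Nat.sInf_le ⟨J, hJd, rfl⟩) ?_
    omega
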